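/- Let α > 0 and let ℓ be a positive integer. Then there exists an integer n₀ = n₀(α, ℓ) such that every oriented graph G on n ≥ n₀ vertices with minimum semidegree δ⁰(G) ≥ αn contains every orientation C of a cycle of length at most ℓ whose cycle-type t(C) is 0 (i.e. C has equally many edges oriented forwards and backwards). -/

import Mathlib

/-- An oriented graph: a digraph (relation) with no loops and no pair of
antiparallel edges. -/
def IsOrientedGraph {V : Type*} (E : V → V → Prop) : Prop :=
  ∀ x y, E x y → ¬ E y x

/-- The outdegree `d⁺(x)` of a vertex. -/
noncomputable def outDeg {V : Type*} (E : V → V → Prop) (x : V) : ℕ :=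
  Nat.card {y // E x y}

/-- The indegree `d⁻(x)` of a vertex. -/
noncomputable def inDeg {V : Type*} (E : V → V → Prop) (x : V) : ℕ :=
  Nat.card {y // E y x}

/-- The minimum semidegree `δ⁰(G) = min over x of min (d⁺(x), d⁻(x))`. -/
noncomputable def minSemidegree {V : Type*} (E : V → V → Prop) : ℕ :=
  sInf (Set.range fun x => min (outDeg E x) (inDeg E x))

/-- The minimum outdegree `δ⁺(G)`. -/
noncomputable def minOutdegree {V : Type*} (E : V → V → Prop) : ℕ :=
  sInf (Set.range fun x => outDeg E x)

/-- `G` contains a directed cycle of length `ℓ`: distinct vertices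
`v₀, …, v_{ℓ-1}` (indexed cyclically) with all consecutive edges present. -/
def HasCycle {V : Type*} (E : V → V → Prop) (ℓ : ℕ) : Prop :=
  ∃ v : ZMod ℓ → V, Function.Injective v ∧ ∀ i, E (v i) (v (i + 1))

/-- `G` contains a directed `ℓ`-cycle through the vertex `u`. -/
def HasCycleThrough {V : Type*} (E : V → V → Prop) (ℓ : ℕ) (u : V) : Prop :=
  ∃ v : ZMod ℓ → V, Function.Injective v ∧ (∀ i, E (v i) (v (i + 1))) ∧ ∃ i, v i = u

/-- `G` contains the orientation of an `ℓ`-cycle described by `c`: `c i = true`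
means the edge between positions `i` and `i+1` is directed forwards. -/
def ContainsOrientation {V : Type*} (E : V → V → Prop) (ℓ : ℕ) (c : ZMod ℓ → Bool) : Prop :=
  ∃ v : ZMod ℓ → V, Function.Injective v ∧
    ∀ i, if c i then E (v i) (v (i + 1)) else E (v (i + 1)) (v i)

open Finset

section Aux
variable {V : Type} [Fintype V] [DecidableEq V]

lemma pc_filter (E : V → V → Prop) [DecidableRel E] (S : Finset V) (m : ℕ) (w : V) :
    ((S.powersetCard m).filter fun A => ∀ u ∈ A, E u w)
      = (S.filter fun u => E u w).powersetCard m := by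
  ext A
  simp only [Finset.mem_filter, Finset.mem_powersetCard, Finset.subset_iff,
    Finset.mem_filter]
  constructor
  · rintro ⟨⟨hAS, hcard⟩, hE⟩; exact ⟨fun x hx => ⟨hAS hx, hE x hx⟩, hcard⟩
  · rintro ⟨h, hcard⟩; exact ⟨⟨fun x hx => (h hx).1, hcard⟩, fun u hu => (h hu).2⟩

lemma double_count (E : V → V → Prop) [DecidableRel E] (S : Finset V) (m : ℕ) :
    ∑ A ∈ S.powersetCard m, (univ.filter fun w => ∀ u ∈ A, E u w).card
      = ∑ w : V, ((S.filter fun u => E u w).card).choose m := by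
  calc ∑ A ∈ S.powersetCard m, (univ.filter fun w => ∀ u ∈ A, E u w).card
      = ∑ A ∈ S.powersetCard m, ∑ w : V, if (∀ u ∈ A, E u w) then 1 else 0 :=
        Finset.sum_congr rfl fun A _ => Finset.card_filter _ _
    _ = ∑ w : V, ∑ A ∈ S.powersetCard m, if (∀ u ∈ A, E u w) then 1 else 0 :=
        Finset.sum_comm
    _ = ∑ w : V, ((S.filter fun u => E u w).card).choose m :=
        Finset.sum_congr rfl fun w _ => by
          rw [← Finset.card_filter, pc_filter, Finset.card_powersetCard]

lemma choose_ratio (q N m : ℕ) :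
    (q + 2 - m) ^ m * N.choose m ≤ (q+1).choose m * N ^ m := by
  have h1 : (q + 2 - m) ^ m ≤ (q+1).descFactorial m := by
    have := Nat.pow_sub_le_descFactorial (q+1) m
    simpa using this
  have h2 : N.descFactorial m ≤ N ^ m := Nat.descFactorial_le_pow N m
  have key : m.factorial * ((q + 2 - m) ^ m * N.choose m)
      ≤ m.factorial * ((q+1).choose m * N ^ m) := by
    calc m.factorial * ((q + 2 - m) ^ m * N.choose m)
        = (q + 2 - m) ^ m * (m.factorial * N.choose m) := by ring
      _ = (q + 2 - m) ^ m * N.descFactorial m := by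
          rw [Nat.descFactorial_eq_factorial_mul_choose]
      _ ≤ (q+1).descFactorial m * N ^ m := Nat.mul_le_mul h1 h2
      _ = m.factorial * ((q+1).choose m * N ^ m) := by
          rw [Nat.descFactorial_eq_factorial_mul_choose]; ring
  exact Nat.le_of_mul_le_mul_left key m.factorial_pos

set_option maxHeartbeats 1000000 in
lemma step_lemma (E : V → V → Prop) [DecidableRel E] (K m : ℕ) (hK : 1 ≤ K) (hm : 1 ≤ m)
    (hdeg : ∀ x : V, (Fintype.card V : ℝ) / K ≤ ((Finset.univ.filter fun y => E x y).card : ℝ))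
    (S : Finset V) (hS : (16 * K * m : ℝ) ≤ S.card) :
    ∃ A T : Finset V, A ⊆ S ∧ A.card = m ∧ (∀ u ∈ A, ∀ w ∈ T, E u w) ∧
      (Fintype.card V : ℝ) / (2 * K * (8 * K) ^ m) ≤ T.card := by
  set n := Fintype.card V with hn
  set N := S.card with hNdef
  have hKR : (1:ℝ) ≤ K := by exact_mod_cast hK
  have hNnat : 16 * K * m ≤ N := by exact_mod_cast hS
  have hN0 : 0 < N := by nlinarith [hK, hm]
  have hmN : m ≤ N := by nlinarith
  -- double counting of edges
  have hdc : ∑ w : V, (S.filter fun u => E u w).card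
      = ∑ u ∈ S, (univ.filter fun y => E u y).card := by
    simp only [Finset.card_filter]
    rw [Finset.sum_comm]
  have hsum : (N:ℝ) * ((n:ℝ) / K) ≤ ∑ w : V, ((S.filter fun u => E u w).card : ℝ) := by
    have h1 : (N:ℝ) * ((n:ℝ) / K) ≤ ∑ u ∈ S, ((univ.filter fun y => E u y).card : ℝ) := by
      calc (N:ℝ) * ((n:ℝ)/K) = ∑ _u ∈ S, ((n:ℝ)/K) := by
            rw [Finset.sum_const]; push_cast; ring
        _ ≤ _ := Finset.sum_le_sum fun u _ => hdeg u
    have h2 : ∑ u ∈ S, ((univ.filter fun y => E u y).card : ℝ)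
        = ∑ w : V, ((S.filter fun u => E u w).card : ℝ) := by exact_mod_cast hdc.symm
    linarith [h1, h2.le, h2.ge]
  set q : ℕ := N / (4 * K) with hq
  set B : Finset V := univ.filter fun w => q < (S.filter fun u => E u w).card with hB
  set b : ℕ := B.card with hb
  have hsplit : ∑ w : V, (S.filter fun u => E u w).card ≤ b * N + n * q := by
    have hsp : (∑ w ∈ B, (S.filter fun u => E u w).card)
        + ∑ w ∈ univ.filter (fun w => ¬ q < (S.filter fun u => E u w).card),
            (S.filter fun u => E u w).card
        = ∑ w : V, (S.filter fun u => E u w).card :=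
      Finset.sum_filter_add_sum_filter_not univ _ _
    have h1 : ∑ w ∈ B, (S.filter fun u => E u w).card ≤ b * N := by
      have := Finset.sum_le_card_nsmul B (fun w => (S.filter fun u => E u w).card) N
        (fun w _ => Finset.card_filter_le S _)
      simpa [smul_eq_mul, ← hb] using this
    have h2 : ∑ w ∈ univ.filter (fun w => ¬ q < (S.filter fun u => E u w).card),
        (S.filter fun u => E u w).card ≤ n * q := by
      have hle := Finset.sum_le_card_nsmul
        (univ.filter (fun w => ¬ q < (S.filter fun u => E u w).card))
        (fun w => (S.filter fun u => E u w).card) q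
        (fun w hw => by simpa using le_of_not_gt (Finset.mem_filter.1 hw).2)
      calc _ ≤ (univ.filter (fun w => ¬ q < (S.filter fun u => E u w).card)).card * q := by
            simpa [smul_eq_mul] using hle
        _ ≤ n * q := Nat.mul_le_mul_right q (by simpa [hn] using Finset.card_filter_le univ _)
    omega
  have hqR : (q:ℝ) ≤ (N:ℝ) / (4*K) := by
    have := (Nat.cast_div_le : ((N / (4*K) : ℕ) : ℝ) ≤ (N : ℝ) / ((4*K : ℕ) : ℝ))
    rw [hq]; push_cast at this ⊢; convert this using 2
  have hbR : 3/4 * ((n:ℝ)/K) ≤ (b:ℝ) := by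
    have hsplitR : (∑ w : V, ((S.filter fun u => E u w).card : ℝ)) ≤ (b:ℝ) * N + (n:ℝ) * q := by
      exact_mod_cast hsplit
    have hKpos : (0:ℝ) < K := by linarith
    have hNR : (0:ℝ) < N := by exact_mod_cast hN0
    have h := hsum.trans hsplitR
    have hnq : (n:ℝ) * q ≤ (N:ℝ) * ((n:ℝ)/(4*K)) := by
      calc (n:ℝ) * q ≤ (n:ℝ) * ((N:ℝ)/(4*K)) :=
            mul_le_mul_of_nonneg_left hqR (by positivity)
        _ = (N:ℝ) * ((n:ℝ)/(4*K)) := by ring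
    have hkey : (N:ℝ) * (3/4 * ((n:ℝ)/K)) ≤ (b:ℝ) * N := by
      have h3 : (N:ℝ) * ((n:ℝ)/K) - (N:ℝ) * ((n:ℝ)/(4*K)) ≤ (b:ℝ) * N := by linarith
      calc (N:ℝ) * (3/4 * ((n:ℝ)/K)) = (N:ℝ)*((n:ℝ)/K) - (N:ℝ)*((n:ℝ)/(4*K)) := by
            field_simp; ring
        _ ≤ (b:ℝ) * N := h3
    nlinarith
  -- q is large
  have hq4m : 4 * m ≤ q := by
    rw [hq, Nat.le_div_iff_mul_le (by omega : 0 < 4*K)]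
    calc 4*m*(4*K) = 16*K*m := by ring
      _ ≤ N := hNnat
  have hmq : m ≤ q + 2 := by omega
  set r : ℕ := q + 2 - m with hr
  have hrcast : (r:ℝ) = (q:ℝ) + 2 - m := by
    rw [hr]; push_cast [hmq]; ring
  have hKpos : (0:ℝ) < K := by linarith
  have hNR : (0:ℝ) < N := by exact_mod_cast hN0
  have hNub : (N:ℝ) ≤ 4*K*(q:ℝ) + 4*K := by
    have hmod := Nat.div_add_mod N (4*K)
    have hmlt : N % (4*K) < 4*K := Nat.mod_lt N (by omega)
    have : (4*K) * q + N % (4*K) = N := by rw [hq] at *; exact_mod_cast hmod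
    have hcast : ((4*K) * q + N % (4*K) : ℕ) = (N:ℕ) := this
    have := congrArg (fun x : ℕ => (x:ℝ)) hcast
    push_cast at this
    have hmltR : ((N % (4*K) : ℕ):ℝ) < 4*K := by exact_mod_cast hmlt
    nlinarith
  have hm4R : 4*(m:ℝ) ≤ (q:ℝ) := by exact_mod_cast hq4m
  have hrR : (N:ℝ)/(8*K) ≤ (r:ℝ) := by
    rw [div_le_iff₀ (by positivity)]
    nlinarith [hrcast, hNub, hm4R]
  -- averaging over m-subsets
  have hpc_ne : (S.powersetCard m).Nonempty := by
    rw [Finset.powersetCard_nonempty]; exact hmN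
  obtain ⟨A, hA, hAmax⟩ := Finset.exists_max_image (S.powersetCard m)
    (fun A => (univ.filter fun w => ∀ u ∈ A, E u w).card) hpc_ne
  set TA : Finset V := univ.filter fun w => ∀ u ∈ A, E u w with hTA
  have hlow : b * (q+1).choose m ≤ ∑ A' ∈ S.powersetCard m,
      (univ.filter fun w => ∀ u ∈ A', E u w).card := by
    rw [double_count]
    calc b * (q+1).choose m
        ≤ ∑ w ∈ B, ((S.filter fun u => E u w).card).choose m := by
          rw [hb]
          have := Finset.card_nsmul_le_sum B
            (fun w => ((S.filter fun u => E u w).card).choose m) ((q+1).choose m)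
            (fun w hw => Nat.choose_le_choose m (by
              have := (Finset.mem_filter.1 (hB ▸ hw)).2; omega))
          simpa [smul_eq_mul] using this
      _ ≤ ∑ w : V, ((S.filter fun u => E u w).card).choose m :=
          Finset.sum_le_sum_of_subset (Finset.subset_univ B)
  have hup : ∑ A' ∈ S.powersetCard m, (univ.filter fun w => ∀ u ∈ A', E u w).card
      ≤ N.choose m * TA.card := by
    have := Finset.sum_le_card_nsmul (S.powersetCard m)
      (fun A' => (univ.filter fun w => ∀ u ∈ A', E u w).card) TA.card
      (fun A' hA' => hAmax A' hA')
    simpa [smul_eq_mul, Finset.card_powersetCard, hNdef] using this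
  have hAT : b * (q+1).choose m ≤ N.choose m * TA.card := hlow.trans hup
  -- combine with choose_ratio
  have hCq : 0 < (q+1).choose m := Nat.choose_pos (by omega)
  have hmain : b * r^m ≤ TA.card * N^m := by
    have hch := choose_ratio q N m
    rw [← hr] at hch
    have h1 : (b * r^m) * (q+1).choose m ≤ (TA.card * N^m) * (q+1).choose m := by
      calc (b * r^m) * (q+1).choose m = (b * (q+1).choose m) * r^m := by ring
        _ ≤ (N.choose m * TA.card) * r^m := Nat.mul_le_mul_right _ hAT
        _ = TA.card * (r^m * N.choose m) := by ring
        _ ≤ TA.card * ((q+1).choose m * N^m) := Nat.mul_le_mul_left _ hch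
        _ = (TA.card * N^m) * (q+1).choose m := by ring
    exact Nat.le_of_mul_le_mul_right h1 hCq
  -- final real bound
  refine ⟨A, TA, (Finset.mem_powersetCard.1 hA).1, (Finset.mem_powersetCard.1 hA).2, ?_, ?_⟩
  · intro u hu w hw
    exact (Finset.mem_filter.1 hw).2 u hu
  · have hcast : (b:ℝ) * (r:ℝ)^m ≤ (TA.card:ℝ) * (N:ℝ)^m := by exact_mod_cast hmain
    have hc0 : (0:ℝ) ≤ (N:ℝ)/(8*K) := div_nonneg hNR.le (by linarith)
    have step1 : 3/4*((n:ℝ)/K) * ((N:ℝ)/(8*K))^m ≤ (b:ℝ)*(r:ℝ)^m :=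
      mul_le_mul hbR (pow_le_pow_left₀ hc0 hrR m) (pow_nonneg hc0 m)
        (Nat.cast_nonneg b)
    have step2 : (n:ℝ)/(2*K*(8*K)^m) * (N:ℝ)^m ≤ 3/4*((n:ℝ)/K)*((N:ℝ)/(8*K))^m := by
      have hX : (0:ℝ) ≤ (n:ℝ)*(N:ℝ)^m / (2*K*(8*K)^m) := by positivity
      calc (n:ℝ)/(2*K*(8*K)^m) * (N:ℝ)^m = (n:ℝ)*(N:ℝ)^m/(2*K*(8*K)^m) := by ring
        _ ≤ (3/2) * ((n:ℝ)*(N:ℝ)^m/(2*K*(8*K)^m)) := by linarith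
        _ = 3/4*((n:ℝ)/K)*((N:ℝ)^m/(8*K)^m) := by
            field_simp
            ring
        _ = 3/4*((n:ℝ)/K)*((N:ℝ)/(8*K))^m := by rw [div_pow]
    have final : (n:ℝ)/(2*K*(8*K)^m) * (N:ℝ)^m ≤ (TA.card:ℝ) * (N:ℝ)^m :=
      step2.trans (step1.trans hcast)
    exact le_of_mul_le_mul_right final (by positivity)
end Aux

section Chain
variable {V : Type} [Fintype V] [DecidableEq V]

lemma chain_lemma (E : V → V → Prop) [DecidableRel E] (K m : ℕ) (hK : 1 ≤ K) (hm : 1 ≤ m)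
    (hdeg : ∀ x : V, (Fintype.card V : ℝ) / K ≤ ((Finset.univ.filter fun y => E x y).card : ℝ))
    (hn : (32 * K^2 * m * (8*K)^m : ℝ) ≤ Fintype.card V) (k : ℕ) :
    ∃ A : ℕ → Finset V, (∀ j < k, (A j).card = m) ∧
      ((Fintype.card V : ℝ) / (2 * K * (8 * K) ^ m) ≤ (A k).card) ∧
      (∀ j < k, ∀ u ∈ A j, ∀ w ∈ A (j+1), E u w) := by
  have hKR : (1:ℝ) ≤ K := by exact_mod_cast hK
  have hmR : (1:ℝ) ≤ m := by exact_mod_cast hm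
  have h8K : (1:ℝ) ≤ 8*K := by linarith
  have hden : (1:ℝ) ≤ 2*K*(8*K)^m := by
    have h1 : (1:ℝ) ≤ (8*K)^m := one_le_pow₀ h8K
    nlinarith
  induction k with
  | zero =>
    refine ⟨fun _ => Finset.univ, by omega, ?_, by omega⟩
    rw [Finset.card_univ]
    rw [div_le_iff₀ (by linarith)]
    nlinarith [(Nat.cast_nonneg (Fintype.card V) : (0:ℝ) ≤ Fintype.card V)]
  | succ k ih =>
    obtain ⟨A, hcard, hlast, hedge⟩ := ih
    have hSbig : (16 * K * m : ℝ) ≤ (A k).card := by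
      refine le_trans ?_ hlast
      rw [le_div_iff₀ (by linarith)]
      calc (16*K*m : ℝ) * (2*K*(8*K)^m) = 32 * K^2 * m * (8*K)^m := by ring
        _ ≤ Fintype.card V := hn
    obtain ⟨A', T, hA'S, hA'card, hA'T, hT⟩ := step_lemma E K m hK hm hdeg (A k) hSbig
    refine ⟨fun j => if j < k then A j else if j = k then A' else T, ?_, ?_, ?_⟩
    · intro j hj
      rcases lt_or_eq_of_le (Nat.lt_succ_iff.1 hj) with h | h
      · simp [h, hcard j h]
      · simp [h, hA'card]
    · have : ¬ (k+1 < k) ∧ (k+1) ≠ k := by omega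
      simp [this.1, this.2, hT]
    · intro j hj u hu w hw
      rcases lt_or_eq_of_le (Nat.lt_succ_iff.1 hj) with h | h
      · simp only [if_pos h] at hu
        rcases lt_or_eq_of_le (Nat.succ_le_of_lt h) with h2 | h2
        · simp only [if_pos h2] at hw
          exact hedge j h u hu w hw
        · have : ¬ (j+1 < k) := by omega
          simp only [if_neg this, if_pos h2] at hw
          have hw' : w ∈ A (j+1) := by have : j+1 = k := h2; rw [this]; exact hA'S hw
          exact hedge j h u hu w hw'
      · subst h
        have h1 : ¬ (j < j) := by omega
        have h2 : ¬ (j + 1 < j) ∧ j + 1 ≠ j := by omega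
        simp only [if_neg h1, if_pos rfl] at hu
        simp only [if_neg h2.1, if_neg h2.2] at hw
        exact hA'T u hu w hw
end Chain

section Heights

lemma sum_zmod {m : ℕ} [NeZero m] (f : ZMod m → ℤ) :
    ∑ j ∈ Finset.range m, f (j : ZMod m) = ∑ i : ZMod m, f i := by
  refine Finset.sum_bij (fun j _ => (j : ZMod m)) (fun j _ => Finset.mem_univ _)
    (fun j1 h1 j2 h2 heq => ?_) (fun i _ => ⟨i.val, Finset.mem_range.2 (ZMod.val_lt i), ?_⟩)
    (fun _ _ => rfl)
  · have e1 := ZMod.val_cast_of_lt (Finset.mem_range.1 h1)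
    have e2 := ZMod.val_cast_of_lt (Finset.mem_range.1 h2)
    rw [← e1, ← e2, heq]
  · exact ZMod.natCast_rightInverse i

lemma balance_sum {m : ℕ} [NeZero m] (c : ZMod m → Bool)
    (hbal : Nat.card {i : ZMod m // c i = true} = Nat.card {i : ZMod m // c i = false}) :
    ∑ j ∈ Finset.range m, (if c (j : ZMod m) then (1:ℤ) else -1) = 0 := by
  classical
  rw [sum_zmod (fun i => if c i then (1:ℤ) else -1)]
  rw [Finset.sum_ite, Finset.sum_const, Finset.sum_const]
  have h1 : Nat.card {i : ZMod m // c i = true}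
      = (Finset.univ.filter fun i : ZMod m => c i = true).card := by
    rw [Nat.card_eq_fintype_card, Fintype.card_subtype]
  have h2 : Nat.card {i : ZMod m // c i = false}
      = (Finset.univ.filter fun i : ZMod m => c i = false).card := by
    rw [Nat.card_eq_fintype_card, Fintype.card_subtype]
  have h3 : (Finset.univ.filter fun i : ZMod m => ¬ (c i = true))
      = (Finset.univ.filter fun i : ZMod m => c i = false) := by
    apply Finset.filter_congr; intro i _; simp
  rw [h1, h2] at hbal
  rw [h3, ← hbal]
  simp [smul_eq_mul]

lemma level_exists {m : ℕ} (hm3 : 3 ≤ m) (c : ZMod m → Bool)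
    (hbal : Nat.card {i : ZMod m // c i = true} = Nat.card {i : ZMod m // c i = false}) :
    ∃ lev : ZMod m → ℕ, (∀ i, lev i < 2*m+1) ∧
      (∀ i : ZMod m, if c i then lev (i+1) = lev i + 1 else lev i = lev (i+1) + 1) := by
  haveI : NeZero m := ⟨by omega⟩
  haveI : Fact (1 < m) := ⟨by omega⟩
  set g : ℕ → ℤ := fun j => ∑ t ∈ Finset.range j, (if c (t : ZMod m) then (1:ℤ) else -1) with hg
  have hgs : ∀ j, g (j+1) = g j + (if c (j : ZMod m) then 1 else -1) := fun j =>
    Finset.sum_range_succ _ j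
  have hbound : ∀ j : ℕ, -(j:ℤ) ≤ g j ∧ g j ≤ (j:ℤ) := by
    intro j; induction j with
    | zero => simp [hg]
    | succ j ih =>
      rw [hgs]
      push_cast
      split_ifs <;> omega
  have hgm : g m = 0 := balance_sum c hbal
  refine ⟨fun i => (g i.val + m).toNat, fun i => ?_, fun i => ?_⟩
  · dsimp only
    have h := hbound i.val
    have hv : (i.val:ℤ) < m := by exact_mod_cast ZMod.val_lt i
    omega
  · dsimp only
    have hkey : g ((i+1).val) = g i.val + (if c i then 1 else -1) := by
      have hvlt := ZMod.val_lt i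
      have hadd : (i+1).val = (i.val + 1) % m := by
        rw [ZMod.val_add, ZMod.val_one]
      by_cases hc : i.val + 1 = m
      · have h0 : (i+1).val = 0 := by rw [hadd, hc, Nat.mod_self]
        have hstep := hgs i.val
        rw [show ((i.val : ZMod m)) = i from ZMod.natCast_rightInverse i] at hstep
        rw [hc] at hstep
        have hg0 : g 0 = 0 := by simp [hg]
        rw [h0, hg0]
        rw [hgm] at hstep
        split_ifs at hstep ⊢ <;> omega
      · have h1 : (i+1).val = i.val + 1 := by rw [hadd, Nat.mod_eq_of_lt (by omega)]
        rw [h1, hgs i.val, show ((i.val : ZMod m)) = i from ZMod.natCast_rightInverse i]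
    have hb1 := hbound i.val
    have hb2 := hbound (i+1).val
    have hv1 : (i.val:ℤ) < m := by exact_mod_cast ZMod.val_lt i
    have hv2 : ((i+1).val:ℤ) < m := by exact_mod_cast ZMod.val_lt (i+1)
    by_cases hc : c i = true <;> simp only [hc, if_true, if_false, Bool.false_eq_true] at hkey ⊢ <;>
      omega

end Heights

theorem cycle_type_zero (α : ℝ) (hα : 0 < α) (ℓ : ℕ) (hℓ : 0 < ℓ) :
    ∃ n₀ : ℕ, ∀ (V : Type) [Fintype V] (E : V → V → Prop), IsOrientedGraph E →
      n₀ ≤ Fintype.card V →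
      α * Fintype.card V ≤ (minSemidegree E : ℝ) →
      ∀ m, 3 ≤ m → m ≤ ℓ → ∀ c : ZMod m → Bool,
        Nat.card {i : ZMod m // c i = true} = Nat.card {i : ZMod m // c i = false} →
        ContainsOrientation E m c := by
  classical
  set K : ℕ := max 1 ⌈α⁻¹⌉₊ with hKdef
  have hK : 1 ≤ K := le_max_left _ _
  have hKα : α⁻¹ ≤ (K:ℝ) := by
    calc α⁻¹ ≤ (⌈α⁻¹⌉₊ : ℝ) := Nat.le_ceil _
      _ ≤ (K:ℝ) := by exact_mod_cast le_max_right _ _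
  refine ⟨32 * K^2 * ℓ * (8*K)^ℓ, fun V _ E _ hn0 hmin m hm3 hmℓ c hbal => ?_⟩
  set n := Fintype.card V with hn
  have hKpos : (0:ℝ) < K := by exact_mod_cast hK
  have hdeg : ∀ x : V, (n:ℝ)/K ≤ ((Finset.univ.filter fun y => E x y).card : ℝ) := by
    intro x
    have h1 : minSemidegree E ≤ outDeg E x := by
      rw [minSemidegree]
      exact (Nat.sInf_le (Set.mem_range_self x)).trans (min_le_left _ _)
    have h2 : outDeg E x = (Finset.univ.filter fun y => E x y).card := by
      rw [outDeg, Nat.card_eq_fintype_card, Fintype.card_subtype]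
    have h3 : α * n ≤ ((Finset.univ.filter fun y => E x y).card : ℝ) := by
      refine hmin.trans ?_
      rw [← h2]
      exact_mod_cast h1
    have h4 : (1:ℝ)/K ≤ α := by
      rw [div_le_iff₀ hKpos]
      calc (1:ℝ) = α * α⁻¹ := (mul_inv_cancel₀ hα.ne').symm
        _ ≤ α * K := by nlinarith
    calc (n:ℝ)/K = (n:ℝ) * (1/K) := by ring
      _ ≤ (n:ℝ) * α := by
          apply mul_le_mul_of_nonneg_left h4 (Nat.cast_nonneg n)
      _ = α * n := by ring
      _ ≤ _ := h3
  have hm1 : 1 ≤ m := by omega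
  have hnbig : (32 * K^2 * m * (8*K)^m : ℝ) ≤ n := by
    have hnat : 32 * K^2 * m * (8*K)^m ≤ 32 * K^2 * ℓ * (8*K)^ℓ :=
      Nat.mul_le_mul (Nat.mul_le_mul_left _ hmℓ)
        (Nat.pow_le_pow_right (by omega) hmℓ)
    calc (32 * K^2 * m * (8*K)^m : ℝ) ≤ (32 * K^2 * ℓ * (8*K)^ℓ : ℕ) := by
          push_cast; exact_mod_cast hnat
      _ ≤ n := by exact_mod_cast hn0
  obtain ⟨lev, hlev_lt, hstep⟩ := level_exists hm3 c hbal
  obtain ⟨A, hAcard, _, hedge⟩ := chain_lemma E K m hK hm1 hdeg hnbig (2*m+1)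
  haveI : NeZero m := ⟨by omega⟩
  have hall : ∀ s : Finset (ZMod m), s.card ≤ (s.biUnion (fun i => A (lev i))).card := by
    intro s
    rcases s.eq_empty_or_nonempty with rfl | ⟨i, hi⟩
    · simp
    · calc s.card ≤ Fintype.card (ZMod m) := Finset.card_le_univ s
        _ = m := ZMod.card m
        _ = (A (lev i)).card := (hAcard _ (hlev_lt i)).symm
        _ ≤ _ := Finset.card_le_card (Finset.subset_biUnion_of_mem (fun i => A (lev i)) hi)
  obtain ⟨f, hfinj, hfmem⟩ :=
    (Finset.all_card_le_biUnion_card_iff_exists_injective (fun i => A (lev i))).1 hall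
  refine ⟨f, hfinj, fun i => ?_⟩
  have hsi := hstep i
  by_cases hc : c i = true
  · simp only [hc, if_true] at hsi ⊢
    have hw : f (i+1) ∈ A (lev i + 1) := by rw [← hsi]; exact hfmem (i+1)
    exact hedge (lev i) (hlev_lt i) (f i) (hfmem i) (f (i+1)) hw
  · simp only [hc, if_false, Bool.false_eq_true] at hsi ⊢
    have hw : f i ∈ A (lev (i+1) + 1) := by rw [← hsi]; exact hfmem i
    exact hedge (lev (i+1)) (hlev_lt (i+1)) (f (i+1)) (hfmem (i+1)) (f i) hw
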